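/- arXiv:2307.14537 — 3 statements merged into one kernel-verified Lean document; each statement's English description precedes it below -/
import Mathlib

section
/- Let p, v, c be points in EuclideanSpace ℝ (Fin 3) with c = v + t • (v - p) for some real t > 0 (i.e., the centroid c lies directly behind v from the perspective of p). Let W > 0 and we > 0 be real numbers, let x ∈ (0, 1), set s := v + x • (p - v) and c' := (W + we * x)⁻¹ • (W • c + (we * x) • ((1/2 : ℝ) • (s + v))). Then there exists a real t' > 0 with c' = s + t' • (v - p). (Key step in the paper's Theorem 4.10: if the pending-subtree centroid lies directly behind v, then the centroid of the pending subtree at any edge subdivision s_x lies directly behind s_x, so every edge subdivision also has node imbalance 0 for the statistics 𝒜 and ℳ.) -/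
theorem subdivision_centroid_directly_behind
    (p v c : EuclideanSpace ℝ (Fin 3)) (t : ℝ) (ht : t > 0)
    (hc : c = v + t • (v - p))
    (W we : ℝ) (hW : W > 0) (hwe : we > 0)
    (x : ℝ) (hx : x ∈ Set.Ioo (0 : ℝ) 1)
    (s : EuclideanSpace ℝ (Fin 3)) (hs : s = v + x • (p - v))
    (c' : EuclideanSpace ℝ (Fin 3))
    (hc' : c' = (W + we * x)⁻¹ • (W • c + (we * x) • ((1/2 : ℝ) • (s + v)))) :
    ∃ t' : ℝ, t' > 0 ∧ c' = s + t' • (v - p) := by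
  obtain ⟨hx0, hx1⟩ := hx
  have hpos : W + we * x > 0 := by positivity
  refine ⟨(W + we * x)⁻¹ * (W * (t + x) + we * x ^ 2 / 2), by positivity, ?_⟩
  subst hc hs hc'
  match_scalars <;> field_simp <;> ring
end

section
/- Let u, v, c be points in EuclideanSpace ℝ (Fin 3) with u ≠ v and dist c v < dist u v, and let λ ∈ [0, 1]. Set z := λ • c + (1 - λ) • ((1/2 : ℝ) • (u + v)). Then the real inner product ⟪z - u, v - u⟫ is strictly positive; in particular InnerProductGeometry.angle (z - u) (v - u) < π / 2. (Claim from the proof of the paper's Theorem 4.11, sensitivity to linearity: if the subdivision point u is farther from v than the subtree centroid c is, then the centroid of the subtree pending at u, which lies between c and the midpoint of u and v, makes an acute centroid angle, i.e., 𝒜(u) < π/2.) -/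
theorem subdivision_centroid_acute_angle
    (u v c : EuclideanSpace ℝ (Fin 3)) (huv : u ≠ v)
    (hcv : dist c v < dist u v) (l : ℝ) (hl : l ∈ Set.Icc (0 : ℝ) 1)
    (z : EuclideanSpace ℝ (Fin 3))
    (hz : z = l • c + (1 - l) • ((1/2 : ℝ) • (u + v))) :
    (0 : ℝ) < inner ℝ (z - u) (v - u) ∧
      InnerProductGeometry.angle (z - u) (v - u) < Real.pi / 2 := by
  obtain ⟨hl0, hl1⟩ := hl
  have hvu : (0:ℝ) < ‖v - u‖ := by
    rw [norm_pos_iff, sub_ne_zero]; exact (Ne.symm huv)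
  have hA : (0:ℝ) < inner ℝ (c - u) (v - u) := by
    have h1 : (c - u : EuclideanSpace ℝ (Fin 3)) = (c - v) + (v - u) := by abel
    have h2 : inner ℝ (c - u) (v - u) =
        inner ℝ (c - v) (v - u) + (‖v - u‖:ℝ)^2 := by
      rw [h1, inner_add_left, real_inner_self_eq_norm_sq]
    have h3 : |(inner ℝ (c - v) (v - u) : ℝ)| ≤ ‖c - v‖ * ‖v - u‖ :=
      abs_real_inner_le_norm _ _
    have h4 : ‖c - v‖ < ‖v - u‖ := by
      have := hcv
      rw [dist_eq_norm, dist_eq_norm] at this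
      calc ‖c - v‖ < ‖u - v‖ := this
        _ = ‖v - u‖ := by rw [← neg_sub, norm_neg]
    nlinarith [neg_abs_le (inner ℝ (c - v) (v - u) : ℝ), norm_nonneg (c - v)]
  have hzu : (z - u : EuclideanSpace ℝ (Fin 3)) =
      l • (c - u) + ((1 - l)/2) • (v - u) := by
    rw [hz]
    simp only [smul_smul, smul_add, smul_sub]
    module
  have hip : (0:ℝ) < inner ℝ (z - u) (v - u) := by
    rw [hzu, inner_add_left, real_inner_smul_left, real_inner_smul_left,
      real_inner_self_eq_norm_sq]
    rcases eq_or_lt_of_le hl0 with h0 | h0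
    · nlinarith
    · nlinarith [mul_pos h0 hA, mul_nonneg (by linarith : (0:ℝ) ≤ (1-l)/2) (sq_nonneg ‖v - u‖)]
  refine ⟨hip, ?_⟩
  have hzu0 : (z - u : EuclideanSpace ℝ (Fin 3)) ≠ 0 := by
    intro h; rw [h, inner_zero_left] at hip; exact lt_irrefl 0 hip
  rw [InnerProductGeometry.angle, Real.arccos_lt_pi_div_two]
  exact div_pos hip (mul_pos (norm_pos_iff.2 hzu0) hvu)
end

section
/- Let W and L be real numbers with W > 0 and L > Real.sqrt (1 / W + 1) + 1. Then for every x ∈ [0, 1], (x^2 / 2 + W * L^2 / 2) / (x + W * L) > 1. (Claim from the paper's analysis of maximal trees: if the pending edge length L exceeds √(1/W + 1) + 1, then the third coordinate of the pending-subtree centroid at every edge subdivision exceeds 1, so every edge subdivision attains the maximal centroid angle π and the edge imbalance is maximal for 𝒜 and ℳ.) -/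
theorem centroid_height_exceeds_one
    (W L : ℝ) (hW : W > 0) (hL : L > Real.sqrt (1 / W + 1) + 1) :
    ∀ x ∈ Set.Icc (0 : ℝ) 1, (x^2 / 2 + W * L^2 / 2) / (x + W * L) > 1 := by
  intro x hx
  obtain ⟨hx0, hx1⟩ := hx
  have hnn : (0:ℝ) ≤ 1 / W + 1 := by positivity
  have hs := Real.sq_sqrt hnn
  have hsnn := Real.sqrt_nonneg (1 / W + 1)
  have hL1 : L - 1 > Real.sqrt (1 / W + 1) := by linarith
  have hsq : (L - 1)^2 > 1 / W + 1 := by nlinarith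
  have hWsq : W * (L - 1)^2 > 1 + W := by
    have h2 := mul_lt_mul_of_pos_left hsq hW
    have h3 : W * (1 / W) = 1 := mul_one_div_cancel (ne_of_gt hW)
    nlinarith
  have hLpos : L > 0 := by nlinarith
  have hden : x + W * L > 0 := by positivity
  rw [gt_iff_lt, lt_div_iff₀ hden]
  nlinarith [sq_nonneg (x - 1)]
end
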